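/- Let D be a decoherence map on a nonempty compact convex set Ω in a finite-dimensional real vector space V, and let s_i and s_j be distinct extreme points of D(Ω). Then the refinement sets Ref(s_i) and Ref(s_j) are disjoint: Ref(s_i) ∩ Ref(s_j) = ∅. -/

import Mathlib

/-- `s` refines `x` (written `s ≻ x`) relative to the convex set `Ω`:
there exist `p ∈ (0,1]` and `t ∈ Ω` with `x = p • s + (1-p) • t`. -/
def Refines {V : Type*} [AddCommGroup V] [Module ℝ V] (Ω : Set V) (s x : V) : Prop :=
  ∃ p : ℝ, 0 < p ∧ p ≤ 1 ∧ ∃ t ∈ Ω, x = p • s + (1 - p) • t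

/-- The refinement set of `x` in `Ω`: all states of `Ω` refining `x`. -/
def RefSet {V : Type*} [AddCommGroup V] [Module ℝ V] (Ω : Set V) (x : V) : Set V :=
  {s ∈ Ω | Refines Ω s x}

/-- `F` is a face of `Ω`: a convex subset of `Ω` closed under refinement. -/
def IsFaceOf {V : Type*} [AddCommGroup V] [Module ℝ V] (F Ω : Set V) : Prop :=
  F ⊆ Ω ∧ Convex ℝ F ∧ ∀ s' ∈ F, ∀ s ∈ Ω, Refines Ω s s' → s ∈ F

/-- A decoherence map on `Ω`: a linear map sending `Ω` into itself, idempotent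
on `Ω`, and purity-decreasing (if `D ρ ≻ ρ` then `ρ ≻ D ρ`). -/
def IsDecoherence {V : Type*} [AddCommGroup V] [Module ℝ V]
    (Ω : Set V) (D : V →ₗ[ℝ] V) : Prop :=
  D '' Ω ⊆ Ω ∧ (∀ s ∈ Ω, D (D s) = D s) ∧
    ∀ ρ ∈ Ω, Refines Ω (D ρ) ρ → Refines Ω ρ (D ρ)

/-- the refinement sets of distinct extreme points of `D '' Ω`
are disjoint. -/
theorem refSets_of_distinct_extremePoints_disjoint {V : Type*} [NormedAddCommGroup V]
    [NormedSpace ℝ V] [FiniteDimensional ℝ V]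
    (Ω : Set V) (hne : Ω.Nonempty) (hcomp : IsCompact Ω) (hconv : Convex ℝ Ω)
    (D : V →ₗ[ℝ] V) (hD : IsDecoherence Ω D)
    (si sj : V) (hsi : si ∈ (D '' Ω).extremePoints ℝ) (hsj : sj ∈ (D '' Ω).extremePoints ℝ)
    (hne' : si ≠ sj) :
    RefSet Ω si ∩ RefSet Ω sj = ∅ := by
  have hid := hD.2.1
  have key : ∀ x ∈ (D '' Ω).extremePoints ℝ, ∀ s ∈ Ω, Refines Ω s x → D s = x := by
    rintro x hx s hs ⟨p, hp0, hp1, t, ht, hxeq⟩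
    obtain ⟨hxA, hxext⟩ := hx
    obtain ⟨ρ, hρ, hρx⟩ := hxA
    have hDx : D x = x := by rw [← hρx, hid ρ hρ]
    have hxeq' : x = p • D s + (1 - p) • D t := by
      conv_lhs => rw [← hDx, hxeq]
      simp [map_add, map_smul]
    rcases eq_or_lt_of_le hp1 with h1 | h1
    · rw [h1] at hxeq'; simpa using hxeq'.symm
    · exact (hxext ⟨s, hs, rfl⟩ ⟨t, ht, rfl⟩
        ⟨p, 1 - p, hp0, by linarith, by ring, hxeq'.symm⟩)
  ext s
  simp only [Set.mem_inter_iff, Set.mem_empty_iff_false, iff_false, RefSet,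
    Set.mem_setOf_eq]
  intro h
  exact hne' ((key si hsi s h.1.1 h.1.2).symm.trans (key sj hsj s h.1.1 h.2.2))
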